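/- Let X be a finite set of unit vectors in R^d with probability distribution μ. The following are equivalent: (1) the vector d·μ (indexed by X) lies in the convex hull K(X) of indicator vectors of bases of R^d contained in X; (2) for every 1 ≤ k ≤ d, every k-dimensional subspace V satisfies μ(X ∩ V) ≤ k/d. -/

import Mathlib

open scoped BigOperators Classical

open Module Submodule

noncomputable def stmt12rk {d : ℕ} (S : Finset (EuclideanSpace ℝ (Fin d))) : ℕ :=
  finrank ℝ (span ℝ (S : Set (EuclideanSpace ℝ (Fin d))))

theorem stmt12rk_submod {d : ℕ} (S T : Finset (EuclideanSpace ℝ (Fin d))) :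
    stmt12rk (S ∪ T) + stmt12rk (S ∩ T) ≤ stmt12rk S + stmt12rk T := by
  have h1 : span ℝ ((↑(S ∪ T)) : Set (EuclideanSpace ℝ (Fin d)))
      = span ℝ (S : Set _) ⊔ span ℝ (T : Set _) := by
    rw [Finset.coe_union, Submodule.span_union]
  have h2 : span ℝ ((↑(S ∩ T)) : Set (EuclideanSpace ℝ (Fin d)))
      ≤ span ℝ (S : Set _) ⊓ span ℝ (T : Set _) := by
    rw [Finset.coe_inter]
    exact le_inf (span_mono (Set.inter_subset_left)) (span_mono (Set.inter_subset_right))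
  have h3 := finrank_sup_add_finrank_inf_eq (span ℝ (S : Set (EuclideanSpace ℝ (Fin d))))
      (span ℝ (T : Set (EuclideanSpace ℝ (Fin d))))
  have h4 : stmt12rk (S ∩ T) ≤ finrank ℝ ↑(span ℝ (S : Set (EuclideanSpace ℝ (Fin d))) ⊓ span ℝ (T : Set _)) :=
    Submodule.finrank_mono h2
  unfold stmt12rk at *
  rw [h1]
  omega

theorem stmt12rk_le {d : ℕ} (S : Finset (EuclideanSpace ℝ (Fin d))) : stmt12rk S ≤ d := by
  have := Submodule.finrank_le (span ℝ (S : Set (EuclideanSpace ℝ (Fin d))))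
  simpa [stmt12rk] using this

variable {d : ℕ} {X : Finset (EuclideanSpace ℝ (Fin d))}

noncomputable def stmt12rk' (S : Finset {x // x ∈ X}) : ℕ :=
  stmt12rk (S.image Subtype.val)

theorem stmt12rk'_submod (S T : Finset {x // x ∈ X}) :
    stmt12rk' (S ∪ T) + stmt12rk' (S ∩ T) ≤ stmt12rk' S + stmt12rk' T := by
  have h := stmt12rk_submod (S.image Subtype.val) (T.image Subtype.val)
  rw [← Finset.image_union, ← Finset.image_inter _ _ Subtype.val_injective] at h
  exact h

theorem stmt12rk'_le (S : Finset {x // x ∈ X}) : stmt12rk' S ≤ d := stmt12rk_le _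

theorem stmt12rk'_singleton (hunit : ∀ x ∈ X, ‖x‖ = 1) (i : {x // x ∈ X}) :
    stmt12rk' {i} = 1 := by
  have hne : (i : EuclideanSpace ℝ (Fin d)) ≠ 0 := by
    intro h
    have := hunit i i.2
    rw [h, norm_zero] at this
    norm_num at this
  unfold stmt12rk' stmt12rk
  rw [Finset.image_singleton, Finset.coe_singleton]
  exact finrank_span_singleton hne

noncomputable def stmt12P (d : ℕ) (X : Finset (EuclideanSpace ℝ (Fin d))) :
    Set ({x // x ∈ X} → ℝ) :=
  {y | (∀ i, 0 ≤ y i) ∧ (∀ S : Finset {x // x ∈ X}, ∑ i ∈ S, y i ≤ (stmt12rk' S : ℝ)) ∧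
    (∑ i, y i = d)}

theorem stmt12P_convex : Convex ℝ (stmt12P d X) := by
  intro y hy z hz a b ha hb hab
  obtain ⟨hy0, hyS, hy1⟩ := hy
  obtain ⟨hz0, hzS, hz1⟩ := hz
  simp only [stmt12P, Set.mem_setOf_eq]
  refine ⟨?_, fun S => ?_, ?_⟩
  · intro j
    have := hy0 j; have := hz0 j
    simp only [Pi.add_apply, Pi.smul_apply, smul_eq_mul]
    nlinarith
  · have h1 := hyS S; have h2 := hzS S
    simp only [Pi.add_apply, Pi.smul_apply, smul_eq_mul]
    rw [Finset.sum_add_distrib, ← Finset.mul_sum, ← Finset.mul_sum]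
    nlinarith
  · simp only [Pi.add_apply, Pi.smul_apply, smul_eq_mul]
    rw [Finset.sum_add_distrib, ← Finset.mul_sum, ← Finset.mul_sum, hy1, hz1]
    nlinarith [hab]

theorem stmt12P_isCompact : IsCompact (stmt12P d X) := by
  have hclosed : IsClosed (stmt12P d X) := by
    have h1 : IsClosed {y : {x // x ∈ X} → ℝ | ∀ i, 0 ≤ y i} := by
      have : {y : {x // x ∈ X} → ℝ | ∀ i, 0 ≤ y i} = ⋂ i, {y | 0 ≤ y i} := by
        ext y; simp
      rw [this]
      exact isClosed_iInter fun i => isClosed_le continuous_const (continuous_apply i)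
    have h2 : IsClosed {y : {x // x ∈ X} → ℝ |
        ∀ S : Finset {x // x ∈ X}, ∑ i ∈ S, y i ≤ (stmt12rk' S : ℝ)} := by
      have : {y : {x // x ∈ X} → ℝ | ∀ S : Finset {x // x ∈ X},
          ∑ i ∈ S, y i ≤ (stmt12rk' S : ℝ)} = ⋂ S, {y | ∑ i ∈ S, y i ≤ (stmt12rk' S : ℝ)} := by
        ext y; simp
      rw [this]
      exact isClosed_iInter fun S =>
        isClosed_le (by exact continuous_finset_sum _ fun i _ => continuous_apply i)
          continuous_const
    have h3 : IsClosed {y : {x // x ∈ X} → ℝ | ∑ i, y i = (d : ℝ)} :=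
      isClosed_eq (by exact continuous_finset_sum _ fun i _ => continuous_apply i)
        continuous_const
    exact (h1.inter (h2.inter h3))
  have hsub : stmt12P d X ⊆ Metric.closedBall 0 d := by
    intro y hy
    obtain ⟨hy0, hyS, hy1⟩ := hy
    rw [Metric.mem_closedBall, dist_zero_right]
    refine (pi_norm_le_iff_of_nonneg (by positivity)).2 fun i => ?_
    rw [Real.norm_eq_abs, abs_of_nonneg (hy0 i)]
    calc y i ≤ ∑ j, y j := Finset.single_le_sum (fun j _ => hy0 j) (Finset.mem_univ i)
    _ = d := hy1
  exact (isCompact_closedBall 0 d).of_isClosed_subset hclosed hsub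

theorem stmt12_extreme (hunit : ∀ x ∈ X, ‖x‖ = 1)
    {y : {x // x ∈ X} → ℝ} (hy : y ∈ (stmt12P d X).extremePoints ℝ) :
    ∃ B' : Finset {x // x ∈ X}, B'.card = d ∧
      LinearIndependent ℝ
        (Subtype.val : {x // x ∈ B'.image Subtype.val} → EuclideanSpace ℝ (Fin d)) ∧
      y = fun i => if i ∈ B' then (1 : ℝ) else 0 := by
  obtain ⟨⟨h0, hS, hsum⟩, hext⟩ := hy
  have hub : ∀ i, y i ≤ 1 := by
    intro i
    have := hS {i}
    rwa [Finset.sum_singleton, stmt12rk'_singleton hunit, Nat.cast_one] at this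
  have tight_inter : ∀ S T : Finset {x // x ∈ X},
      (∑ i ∈ S, y i = (stmt12rk' S : ℝ)) → (∑ i ∈ T, y i = (stmt12rk' T : ℝ)) →
      (∑ i ∈ S ∩ T, y i = (stmt12rk' (S ∩ T) : ℝ)) := by
    intro S T h1 h2
    have hsub : ((stmt12rk' (S ∪ T) : ℝ) + stmt12rk' (S ∩ T)) ≤ stmt12rk' S + stmt12rk' T := by
      exact_mod_cast stmt12rk'_submod S T
    have hu := hS (S ∪ T)
    have hi := hS (S ∩ T)
    have hsum2 : (∑ i ∈ S ∪ T, y i) + ∑ i ∈ S ∩ T, y i = (∑ i ∈ S, y i) + ∑ i ∈ T, y i :=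
      Finset.sum_union_inter
    linarith
  have tight_univ : ∑ i ∈ (Finset.univ : Finset {x // x ∈ X}), y i
      = (stmt12rk' (Finset.univ : Finset {x // x ∈ X}) : ℝ) := by
    have h1 : (d : ℝ) ≤ stmt12rk' (Finset.univ : Finset {x // x ∈ X}) := by
      rw [← hsum]; exact hS Finset.univ
    have h2 : stmt12rk' (Finset.univ : Finset {x // x ∈ X}) ≤ d := stmt12rk'_le _
    have h3 : stmt12rk' (Finset.univ : Finset {x // x ∈ X}) = d :=
      le_antisymm h2 (by exact_mod_cast h1)
    rw [h3, hsum]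
  have hmin : ∀ a : {x // x ∈ X}, ∃ T : Finset {x // x ∈ X},
      (∑ i ∈ T, y i = (stmt12rk' T : ℝ)) ∧ a ∈ T ∧
      ∀ S : Finset {x // x ∈ X}, (∑ i ∈ S, y i = (stmt12rk' S : ℝ)) → a ∈ S → T ⊆ S := by
    intro a
    set 𝒯 := Finset.univ.filter
      (fun S : Finset {x // x ∈ X} => (∑ i ∈ S, y i = (stmt12rk' S : ℝ)) ∧ a ∈ S) with h𝒯
    have hne : 𝒯.Nonempty := ⟨Finset.univ, by
      simp only [h𝒯, Finset.mem_filter, Finset.mem_univ, true_and]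
      exact ⟨tight_univ, trivial⟩⟩
    obtain ⟨T, hT𝒯, hTmin⟩ := Finset.exists_min_image 𝒯 Finset.card hne
    simp only [h𝒯, Finset.mem_filter, Finset.mem_univ, true_and] at hT𝒯
    refine ⟨T, hT𝒯.1, hT𝒯.2, fun S hS' haS => ?_⟩
    have hTS : (T ∩ S) ∈ 𝒯 := by
      simp only [h𝒯, Finset.mem_filter, Finset.mem_univ, true_and]
      exact ⟨tight_inter _ _ hT𝒯.1 hS', Finset.mem_inter.2 ⟨hT𝒯.2, haS⟩⟩
    have hle := hTmin _ hTS
    have heq : T ∩ S = T := Finset.eq_of_subset_of_card_le Finset.inter_subset_left hle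
    rw [← heq]; exact Finset.inter_subset_right
  choose Tm hTm1 hTm2 hTm3 using hmin
  have h01 : ∀ i, y i = 0 ∨ y i = 1 := by
    by_contra hcon
    push_neg at hcon
    obtain ⟨a1, ha1, ha1'⟩ := hcon
    set Fr := Finset.univ.filter (fun i : {x // x ∈ X} => y i ≠ 0 ∧ y i ≠ 1) with hFrdef
    have hFr : Fr.Nonempty := ⟨a1, by simp [hFrdef, ha1, ha1']⟩
    obtain ⟨a, haFr, hamin⟩ := Finset.exists_min_image Fr (fun i => (Tm i).card) hFr
    simp only [hFrdef, Finset.mem_filter, Finset.mem_univ, true_and] at haFr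
    have hafrac : 0 < y a ∧ y a < 1 :=
      ⟨(h0 a).lt_of_ne (Ne.symm haFr.1), (hub a).lt_of_ne haFr.2⟩
    have hb : ∃ b ∈ Tm a, b ≠ a ∧ y b ≠ 0 ∧ y b ≠ 1 := by
      by_contra hball
      push_neg at hball
      have hsum' : ∑ i ∈ Tm a, y i = y a + ∑ i ∈ (Tm a).erase a, y i :=
        (Finset.add_sum_erase _ _ (hTm2 a)).symm
      have hval : ∑ i ∈ (Tm a).erase a, y i
          = ((((Tm a).erase a).filter (fun i => y i = 1)).card : ℝ) := by
        rw [← Finset.sum_boole]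
        refine Finset.sum_congr rfl fun i hi => ?_
        have hi' := hball i (Finset.mem_of_mem_erase hi) (Finset.ne_of_mem_erase hi)
        by_cases h1 : y i = 1
        · simp [h1]
        · have h0' : y i = 0 := by
            by_contra h0''
            exact h1 (hi' h0'')
          simp [h0', h1]
      set m := (((Tm a).erase a).filter (fun i => y i = 1)).card with hm
      have hya : y a = (stmt12rk' (Tm a) : ℝ) - m := by
        have := hTm1 a
        rw [hsum', hval] at this
        linarith
      rcases le_or_gt (stmt12rk' (Tm a)) m with h | h
      · have : (stmt12rk' (Tm a) : ℝ) ≤ m := by exact_mod_cast h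
        linarith [hafrac.1]
      · have : (m : ℝ) + 1 ≤ stmt12rk' (Tm a) := by exact_mod_cast h
        linarith [hafrac.2]
    obtain ⟨b, hbTa, hba, hb0, hb1⟩ := hb
    have hbfrac : 0 < y b ∧ y b < 1 :=
      ⟨(h0 b).lt_of_ne (Ne.symm hb0), (hub b).lt_of_ne hb1⟩
    have hbFr : b ∈ Fr := by simp [hFrdef, hb0, hb1]
    have hsubba : Tm b ⊆ Tm a := hTm3 b (Tm a) (hTm1 a) hbTa
    have heqT : Tm b = Tm a := Finset.eq_of_subset_of_card_le hsubba (hamin b hbFr)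
    have hkey : ∀ S : Finset {x // x ∈ X}, (∑ i ∈ S, y i = (stmt12rk' S : ℝ)) →
        (a ∈ S ↔ b ∈ S) := by
      intro S hSt
      constructor
      · intro h; exact (hTm3 a S hSt h) hbTa
      · intro h
        have hsub' := hTm3 b S hSt h
        have haTmb : a ∈ Tm b := by rw [heqT]; exact hTm2 a
        exact hsub' haTmb
    set G := Finset.univ.filter
      (fun S : Finset {x // x ∈ X} => ¬ (∑ i ∈ S, y i = (stmt12rk' S : ℝ))) with hGdef
    set εs : Finset ℝ := insert (y a) (insert (y b)
      (G.image (fun S => (stmt12rk' S : ℝ) - ∑ i ∈ S, y i))) with hεsdef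
    have hεsne : εs.Nonempty := ⟨y a, Finset.mem_insert_self _ _⟩
    set ε := εs.min' hεsne with hεdef
    have hεpos : 0 < ε := by
      rw [hεdef, Finset.lt_min'_iff]
      intro c hc
      simp only [hεsdef, Finset.mem_insert, Finset.mem_image] at hc
      rcases hc with rfl | rfl | ⟨S, hSG, rfl⟩
      · exact hafrac.1
      · exact hbfrac.1
      · simp only [hGdef, Finset.mem_filter, Finset.mem_univ, true_and] at hSG
        have hle := hS S
        have hlt := lt_of_le_of_ne hle hSG
        linarith
    have hεa : ε ≤ y a := Finset.min'_le _ _ (by simp [hεsdef])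
    have hεb : ε ≤ y b := Finset.min'_le _ _ (by simp [hεsdef])
    have hεS : ∀ S : Finset {x // x ∈ X}, ¬ (∑ i ∈ S, y i = (stmt12rk' S : ℝ)) →
        ε ≤ (stmt12rk' S : ℝ) - ∑ i ∈ S, y i := by
      intro S h
      refine Finset.min'_le _ _ ?_
      simp only [hεsdef, Finset.mem_insert, Finset.mem_image]
      right; right
      refine ⟨S, ?_, rfl⟩
      simp [hGdef, h]
    set w : {x // x ∈ X} → ℝ :=
      fun i => (if i = a then (1:ℝ) else 0) - (if i = b then 1 else 0) with hwdef
    have hwa : w a = 1 := by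
      simp only [hwdef, if_pos rfl, if_neg (fun h : a = b => hba h.symm)]
      norm_num
    have hwb : w b = -1 := by
      simp only [hwdef, if_pos rfl, if_neg hba]
      norm_num
    have hwo : ∀ i, i ≠ a → i ≠ b → w i = 0 := by
      intro i h1 h2
      simp [hwdef, h1, h2]
    have hwsum : ∀ S : Finset {x // x ∈ X},
        ∑ i ∈ S, w i = (if a ∈ S then (1:ℝ) else 0) - (if b ∈ S then 1 else 0) := by
      intro S
      simp only [hwdef, Finset.sum_sub_distrib]
      rw [Finset.sum_ite_eq' S a (fun _ => (1:ℝ)), Finset.sum_ite_eq' S b (fun _ => (1:ℝ))]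
    have hzmem : ∀ σ : ℝ, (σ = 1 ∨ σ = -1) → (fun i => y i + σ * ε * w i) ∈ stmt12P d X := by
      intro σ hσ
      have hsplit : ∀ S : Finset {x // x ∈ X}, ∑ i ∈ S, (y i + σ * ε * w i)
          = (∑ i ∈ S, y i)
            + σ * ε * ((if a ∈ S then (1:ℝ) else 0) - (if b ∈ S then 1 else 0)) := by
        intro S
        rw [Finset.sum_add_distrib, ← Finset.mul_sum, hwsum]
      refine ⟨?_, ?_, ?_⟩
      · intro i
        show 0 ≤ y i + σ * ε * w i
        by_cases hia : i = a
        · subst hia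
          rw [hwa]
          rcases hσ with rfl | rfl
          · have := h0 i; linarith
          · have := hεa; linarith
        · by_cases hib : i = b
          · subst hib
            rw [hwb]
            rcases hσ with rfl | rfl
            · have := hεb; linarith
            · have := h0 i; linarith
          · rw [hwo i hia hib]
            have := h0 i; linarith
      · intro S
        show ∑ i ∈ S, (y i + σ * ε * w i) ≤ (stmt12rk' S : ℝ)
        rw [hsplit S]
        by_cases ht : ∑ i ∈ S, y i = (stmt12rk' S : ℝ)
        · have hiff := hkey S ht
          have hc0 : (if a ∈ S then (1:ℝ) else 0) - (if b ∈ S then 1 else 0) = 0 := by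
            by_cases h : a ∈ S
            · rw [if_pos h, if_pos (hiff.1 h)]; ring
            · rw [if_neg h, if_neg (fun hb' => h (hiff.2 hb'))]; ring
          rw [hc0, mul_zero, add_zero, ht]
        · have hsl := hεS S ht
          have hcb : σ * ((if a ∈ S then (1:ℝ) else 0) - (if b ∈ S then 1 else 0)) ≤ 1 := by
            rcases hσ with rfl | rfl <;> split_ifs <;> norm_num
          have : σ * ε * ((if a ∈ S then (1:ℝ) else 0) - (if b ∈ S then 1 else 0)) ≤ ε := by
            have h1 : σ * ε * ((if a ∈ S then (1:ℝ) else 0) - (if b ∈ S then 1 else 0))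
                = ε * (σ * ((if a ∈ S then (1:ℝ) else 0) - (if b ∈ S then 1 else 0))) := by ring
            rw [h1]
            calc ε * (σ * ((if a ∈ S then (1:ℝ) else 0) - (if b ∈ S then 1 else 0)))
                ≤ ε * 1 := by
                  exact mul_le_mul_of_nonneg_left hcb (le_of_lt hεpos)
              _ = ε := mul_one ε
          linarith
      · show ∑ i, (y i + σ * ε * w i) = (d : ℝ)
        rw [hsplit Finset.univ]
        rw [if_pos (Finset.mem_univ a), if_pos (Finset.mem_univ b)]
        rw [hsum]; ring
    have hz1 := hzmem 1 (Or.inl rfl)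
    have hz2 := hzmem (-1) (Or.inr rfl)
    have hseg : y ∈ openSegment ℝ (fun i => y i + 1 * ε * w i) (fun i => y i + (-1) * ε * w i) := by
      refine ⟨1/2, 1/2, by norm_num, by norm_num, by norm_num, ?_⟩
      funext i
      simp only [Pi.add_apply, Pi.smul_apply, smul_eq_mul]
      ring
    have hq := (hext hz1 hz2 hseg).symm
    have := congrFun hq a
    simp only [hwa, mul_one, one_mul] at this
    linarith
  -- now y is 0/1 valued
  set B' := Finset.univ.filter (fun i : {x // x ∈ X} => y i = 1) with hB'def
  have hyf : y = fun i => if i ∈ B' then (1 : ℝ) else 0 := by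
    funext i
    rcases h01 i with h | h
    · have hni : i ∉ B' := by simp [hB'def, h]
      simp [hni, h]
    · simp [hB'def, h]
  have hcard : ∑ i ∈ B', y i = (B'.card : ℝ) := by
    have h1 : ∑ i ∈ B', y i = ∑ i ∈ B', (1 : ℝ) := by
      refine Finset.sum_congr rfl fun i hi => ?_
      simp only [hB'def, Finset.mem_filter] at hi
      exact hi.2
    rw [h1, Finset.sum_const, nsmul_eq_mul, mul_one]
  have hsum' : (B'.card : ℝ) = d := by
    rw [← hcard, Finset.sum_subset (Finset.subset_univ B') ?_, hsum]
    intro i _ hni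
    rcases h01 i with h | h
    · exact h
    · exact absurd (by simp [hB'def, h]) hni
  have hBd : B'.card = d := by exact_mod_cast hsum'
  have hrk : stmt12rk' B' = d := by
    refine le_antisymm (stmt12rk'_le _) ?_
    have h1 : (B'.card : ℝ) ≤ stmt12rk' B' := by rw [← hcard]; exact hS B'
    have h2 : B'.card ≤ stmt12rk' B' := by exact_mod_cast h1
    omega
  have hcardB : (B'.image Subtype.val).card = d := by
    rw [Finset.card_image_of_injective _ Subtype.val_injective, hBd]
  have hind : LinearIndependent ℝ
      (Subtype.val : {x // x ∈ B'.image Subtype.val} → EuclideanSpace ℝ (Fin d)) := by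
    rw [linearIndependent_iff_card_eq_finrank_span]
    have h1 : Fintype.card {x // x ∈ B'.image Subtype.val} = (B'.image Subtype.val).card :=
      Fintype.card_coe _
    have h2 : Set.range (Subtype.val : {x // x ∈ B'.image Subtype.val} → _)
        = ((B'.image Subtype.val : Finset (EuclideanSpace ℝ (Fin d))) : Set _) := by
      rw [Subtype.range_coe_subtype]
      ext x
      simp
    rw [h1, hcardB, h2]
    have h3 : (((B'.image Subtype.val : Finset (EuclideanSpace ℝ (Fin d))) : Set (EuclideanSpace ℝ (Fin d)))).finrank ℝ
        = stmt12rk' B' := by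
      unfold Set.finrank stmt12rk' stmt12rk
      rfl
    rw [h3, hrk]
  exact ⟨B', hBd, hind, hyf⟩

theorem stmt12_P_subset_hull (hunit : ∀ x ∈ X, ‖x‖ = 1) :
    stmt12P d X ⊆ convexHull ℝ {g : {x // x ∈ X} → ℝ | ∃ B' : Finset {x // x ∈ X},
      B'.card = d ∧
      LinearIndependent ℝ
        (Subtype.val : {x // x ∈ B'.image Subtype.val} → EuclideanSpace ℝ (Fin d)) ∧
      g = fun i => if i ∈ B' then (1 : ℝ) else 0} := by
  set S'' := {g : {x // x ∈ X} → ℝ | ∃ B' : Finset {x // x ∈ X},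
      B'.card = d ∧
      LinearIndependent ℝ
        (Subtype.val : {x // x ∈ B'.image Subtype.val} → EuclideanSpace ℝ (Fin d)) ∧
      g = fun i => if i ∈ B' then (1 : ℝ) else 0} with hS''
  have hfin : S''.Finite := by
    refine Set.Finite.subset (Set.finite_range
      (fun B' : Finset {x // x ∈ X} => fun i => if i ∈ B' then (1 : ℝ) else 0)) ?_
    rintro g ⟨B', -, -, rfl⟩
    exact ⟨B', rfl⟩
  have hKM := closure_convexHull_extremePoints (stmt12P_isCompact (d := d) (X := X))
    stmt12P_convex
  have hsub : (stmt12P d X).extremePoints ℝ ⊆ S'' := by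
    intro y hy
    obtain ⟨B', h1, h2, h3⟩ := stmt12_extreme hunit hy
    exact ⟨B', h1, h2, h3⟩
  intro y hy
  rw [← hKM] at hy
  have h3 := closure_mono (convexHull_mono hsub) hy
  rwa [(hfin.isClosed_convexHull (𝕜 := ℝ)).closure_eq] at h3

theorem stmt12_card_le {d : ℕ} (V : Submodule ℝ (EuclideanSpace ℝ (Fin d)))
    (B : Finset (EuclideanSpace ℝ (Fin d)))
    (hB : LinearIndependent ℝ (Subtype.val : {x // x ∈ B} → EuclideanSpace ℝ (Fin d))) :
    (B.filter (fun x => x ∈ V)).card ≤ finrank ℝ V := by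
  set C := B.filter (fun x => x ∈ V) with hC
  have hsub : (C : Set (EuclideanSpace ℝ (Fin d))) ⊆ (B : Set _) := by
    intro x hx; simp [hC] at hx ⊢; exact hx.1
  have hCind : LinearIndependent ℝ (fun x : (C : Set (EuclideanSpace ℝ (Fin d))) => (x : EuclideanSpace ℝ (Fin d))) :=
    LinearIndepOn.mono (show LinearIndepOn ℝ id (B : Set (EuclideanSpace ℝ (Fin d))) from hB) hsub
  have h1 : finrank ℝ (span ℝ (C : Set (EuclideanSpace ℝ (Fin d)))) = C.card :=
    finrank_span_finset_eq_card hCind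
  have h2 : span ℝ (C : Set (EuclideanSpace ℝ (Fin d))) ≤ V := by
    rw [span_le]; intro x hx; simp [hC] at hx; exact hx.2
  have := Submodule.finrank_mono h2
  omega

/-- `d·μ` lies in the convex hull of indicator vectors of bases of `ℝ^d`
contained in `X` iff every `k`-dimensional subspace carries at most a `k/d` fraction of
`(X,μ)`. -/
theorem stmt_12 (d : ℕ) (hd : 0 < d)
    (X : Finset (EuclideanSpace ℝ (Fin d))) (μ : EuclideanSpace ℝ (Fin d) → ℝ)
    (hμ0 : ∀ x ∈ X, 0 ≤ μ x) (hμ1 : ∑ x ∈ X, μ x = 1)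
    (hsupp : ∀ x ∉ X, μ x = 0) (hunit : ∀ x ∈ X, ‖x‖ = 1) :
    ((fun x => (d : ℝ) * μ x) ∈
      convexHull ℝ {f : EuclideanSpace ℝ (Fin d) → ℝ |
        ∃ B : Finset (EuclideanSpace ℝ (Fin d)), B ⊆ X ∧ B.card = d ∧
          LinearIndependent ℝ (Subtype.val : {x // x ∈ B} → EuclideanSpace ℝ (Fin d)) ∧
          f = fun x => if x ∈ B then (1 : ℝ) else 0}) ↔
    (∀ k : ℕ, 1 ≤ k → k ≤ d →
      ∀ V : Submodule ℝ (EuclideanSpace ℝ (Fin d)), Module.finrank ℝ V = k →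
        ∑ x ∈ X.filter (fun x => x ∈ V), μ x ≤ (k : ℝ) / d) := by
  have hd0 : (0 : ℝ) < d := by exact_mod_cast hd
  constructor
  · -- easy direction
    intro h k hk1 hkd V hV
    set C := {f : EuclideanSpace ℝ (Fin d) → ℝ |
      ∑ x ∈ X.filter (fun x => x ∈ V), f x ≤ (k : ℝ)} with hCdef
    have hCconv : Convex ℝ C := by
      intro f hf g hg a b ha hb hab
      simp only [hCdef, Set.mem_setOf_eq] at hf hg ⊢
      simp only [Pi.add_apply, Pi.smul_apply, smul_eq_mul]
      rw [Finset.sum_add_distrib, ← Finset.mul_sum, ← Finset.mul_sum]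
      nlinarith
    have hsubC : {f : EuclideanSpace ℝ (Fin d) → ℝ |
        ∃ B : Finset (EuclideanSpace ℝ (Fin d)), B ⊆ X ∧ B.card = d ∧
          LinearIndependent ℝ (Subtype.val : {x // x ∈ B} → EuclideanSpace ℝ (Fin d)) ∧
          f = fun x => if x ∈ B then (1 : ℝ) else 0} ⊆ C := by
      rintro f ⟨B, hBX, hBcard, hBind, rfl⟩
      simp only [hCdef, Set.mem_setOf_eq]
      rw [Finset.sum_boole]
      have hsub2 : (X.filter (fun x => x ∈ V)).filter (fun x => x ∈ B)
          ⊆ B.filter (fun x => x ∈ V) := by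
        intro x hx
        simp only [Finset.mem_filter] at hx ⊢
        exact ⟨hx.2, hx.1.2⟩
      have hle := (Finset.card_le_card hsub2).trans (stmt12_card_le V B hBind)
      rw [hV] at hle
      exact_mod_cast hle
    have hmem := convexHull_min hsubC hCconv h
    simp only [hCdef, Set.mem_setOf_eq] at hmem
    rw [← Finset.mul_sum] at hmem
    rw [le_div_iff₀ hd0]
    linarith [hmem]
  · -- hard direction
    intro h2
    set y : {x // x ∈ X} → ℝ := fun i => (d : ℝ) * μ ↑i with hydef
    have hyP : y ∈ stmt12P d X := by
      refine ⟨?_, ?_, ?_⟩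
      · intro i
        have := hμ0 ↑i i.2
        simp only [hydef]
        positivity
      · intro S
        by_cases hSe : S = ∅
        · subst hSe
          simp [stmt12rk']
        · obtain ⟨i0, hi0⟩ := Finset.nonempty_of_ne_empty hSe
          set B := S.image Subtype.val with hBdef
          set V := span ℝ (B : Set (EuclideanSpace ℝ (Fin d))) with hVdef
          have hVrank : Module.finrank ℝ V = stmt12rk' S := rfl
          have hne : (i0 : EuclideanSpace ℝ (Fin d)) ≠ 0 := by
            intro hz
            have := hunit ↑i0 i0.2
            rw [hz, norm_zero] at this
            norm_num at this
          have hi0V : (i0 : EuclideanSpace ℝ (Fin d)) ∈ V := by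
            apply subset_span
            simp only [hBdef, Finset.coe_image, Set.mem_image, Finset.mem_coe]
            exact ⟨i0, hi0, rfl⟩
          have hk1 : 1 ≤ stmt12rk' S := by
            rw [← hVrank]
            have : Nontrivial V := ⟨⟨⟨↑i0, hi0V⟩, 0, by
              intro hcontra
              exact hne (by simpa using congrArg Subtype.val hcontra)⟩⟩
            have := Module.finrank_pos_iff (R := ℝ) (M := V) |>.2 this
            omega
          have hkd : stmt12rk' S ≤ d := stmt12rk'_le _
          have hcond := h2 (stmt12rk' S) hk1 hkd V hVrank
          have hsum1 : ∑ i ∈ S, y i = (d : ℝ) * ∑ x ∈ B, μ x := by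
            rw [Finset.mul_sum, hBdef,
              Finset.sum_image (fun a _ b _ hab => Subtype.val_injective hab)]
          have hBsub : B ⊆ X.filter (fun x => x ∈ V) := by
            intro x hx
            simp only [hBdef, Finset.mem_image] at hx
            obtain ⟨i, hiS, rfl⟩ := hx
            refine Finset.mem_filter.2 ⟨i.2, ?_⟩
            apply subset_span
            simp only [hBdef, Finset.coe_image, Set.mem_image, Finset.mem_coe]
            exact ⟨i, hiS, rfl⟩
          have hmono : ∑ x ∈ B, μ x ≤ ∑ x ∈ X.filter (fun x => x ∈ V), μ x :=
            Finset.sum_le_sum_of_subset_of_nonneg hBsub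
              (fun x hx _ => hμ0 x (Finset.mem_filter.1 hx).1)
          calc ∑ i ∈ S, y i = (d : ℝ) * ∑ x ∈ B, μ x := hsum1
            _ ≤ (d : ℝ) * ∑ x ∈ X.filter (fun x => x ∈ V), μ x := by nlinarith
            _ ≤ (d : ℝ) * ((stmt12rk' S : ℝ) / d) := by nlinarith
            _ = (stmt12rk' S : ℝ) := by field_simp
      · simp only [hydef]
        rw [← Finset.mul_sum, Finset.sum_coe_sort X μ, hμ1, mul_one]
    have hyH := stmt12_P_subset_hull hunit hyP
    -- the linear extension map
    set e : ({x // x ∈ X} → ℝ) →ₗ[ℝ] (EuclideanSpace ℝ (Fin d) → ℝ) :=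
      { toFun := fun g x => if h : x ∈ X then g ⟨x, h⟩ else 0,
        map_add' := by
          intro f g
          funext x
          by_cases h : x ∈ X <;> simp [h]
        map_smul' := by
          intro c f
          funext x
          by_cases h : x ∈ X <;> simp [h] } with hedef
    have himg : (fun x => (d : ℝ) * μ x) = e y := by
      funext x
      by_cases h : x ∈ X
      · simp [hedef, hydef, h]
      · simp [hedef, h, hsupp x h]
    have hEy : e y ∈ convexHull ℝ (e '' {g : {x // x ∈ X} → ℝ | ∃ B' : Finset {x // x ∈ X},
        B'.card = d ∧
        LinearIndependent ℝ
          (Subtype.val : {x // x ∈ B'.image Subtype.val} → EuclideanSpace ℝ (Fin d)) ∧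
        g = fun i => if i ∈ B' then (1 : ℝ) else 0}) := by
      rw [← LinearMap.image_convexHull]
      exact ⟨y, hyH, rfl⟩
    rw [himg]
    refine convexHull_mono ?_ hEy
    rintro g ⟨g', ⟨B', hc, hind, rfl⟩, rfl⟩
    refine ⟨B'.image Subtype.val, ?_, ?_, hind, ?_⟩
    · intro x hx
      simp only [Finset.mem_image] at hx
      obtain ⟨i, -, rfl⟩ := hx
      exact i.2
    · rw [Finset.card_image_of_injective _ Subtype.val_injective, hc]
    · funext x
      by_cases h : x ∈ X
      · simp only [hedef, LinearMap.coe_mk, AddHom.coe_mk, dif_pos h]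
        have hiff : (⟨x, h⟩ : {x // x ∈ X}) ∈ B' ↔ x ∈ B'.image Subtype.val := by
          simp only [Finset.mem_image]
          constructor
          · intro hm; exact ⟨⟨x, h⟩, hm, rfl⟩
          · rintro ⟨i, hi, hix⟩
            have : (⟨x, h⟩ : {x // x ∈ X}) = i := Subtype.ext hix.symm
            rw [this]; exact hi
        by_cases hm : (⟨x, h⟩ : {x // x ∈ X}) ∈ B'
        · rw [if_pos hm, if_pos (hiff.1 hm)]
        · rw [if_neg hm, if_neg (fun hc' => hm (hiff.2 hc'))]
      · simp only [hedef, LinearMap.coe_mk, AddHom.coe_mk, dif_neg h]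
        have : x ∉ B'.image Subtype.val := by
          intro hc'
          simp only [Finset.mem_image] at hc'
          obtain ⟨i, -, rfl⟩ := hc'
          exact h i.2
        rw [if_neg this]
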